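/- arXiv:2512.08602 — 4 statements merged into one kernel-verified Lean document; each statement's English description precedes it below -/
import Mathlib

section
/- Let F_{q_0} ⊆ F_q ⊆ F_{q^s} be finite fields with q = q_0^r, let T be a subgroup of F_{q_0}^*, and let d be a divisor of s. Then the number of elements α ∈ F_{q^d}^* ⊆ F_{q^s}^* satisfying N_{F_{q^s}/F_{q_0}}(α) ∈ T equals ((q^d - 1)·|T|/(q_0 - 1)) · gcd(s/d, (q_0 - 1)/|T|). -/
open Module Finset

section Aux

lemma aux_card_pow_eq_one {G : Type*} [CommGroup G] [Fintype G] [IsCyclic G]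
    (j : ℕ) :
    Nat.card {x : G // x ^ j = 1} = Nat.gcd j (Fintype.card G) := by
  obtain ⟨g, hg⟩ := IsCyclic.exists_generator (α := G)
  set φ : G →* G := powMonoidHom j with hφ
  have h1 : Nat.card {x : G // x ^ j = 1} = Nat.card φ.ker := by
    apply Nat.card_congr
    exact Equiv.subtypeEquivRight fun x => by
      simp [hφ, MonoidHom.mem_ker, powMonoidHom_apply]
  have hrange : φ.range = Subgroup.zpowers (g ^ j) := by
    ext y
    constructor
    · rintro ⟨x, rfl⟩
      obtain ⟨i, rfl⟩ := hg x
      exact ⟨i, by simp [hφ, powMonoidHom_apply, ← zpow_natCast, ← zpow_mul, mul_comm]⟩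
    · rintro ⟨i, rfl⟩
      exact ⟨g ^ i, by simp [hφ, powMonoidHom_apply, ← zpow_natCast, ← zpow_mul, mul_comm]⟩
  have h2 : Nat.card G = Nat.card φ.range * Nat.card φ.ker := by
    rw [← Nat.card_congr (QuotientGroup.quotientKerEquivRange φ).toEquiv]
    exact Subgroup.card_eq_card_quotient_mul_card_subgroup φ.ker
  have h3 : Nat.card φ.range = Fintype.card G / Nat.gcd (Fintype.card G) j := by
    rw [hrange, Nat.card_zpowers, orderOf_pow, orderOf_eq_card_of_forall_mem_zpowers hg,
      Nat.card_eq_fintype_card]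
  have hdvd : Nat.gcd (Fintype.card G) j ∣ Fintype.card G := Nat.gcd_dvd_left _ _
  have hpos : 0 < Fintype.card G / Nat.gcd (Fintype.card G) j :=
    Nat.div_pos (Nat.le_of_dvd Fintype.card_pos hdvd)
      (Nat.gcd_pos_of_pos_left _ Fintype.card_pos)
  have := h2
  rw [h3, Nat.card_eq_fintype_card] at this
  rw [h1, Nat.gcd_comm]
  apply Nat.eq_of_mul_eq_mul_left hpos
  rw [← this, Nat.div_mul_cancel hdvd]

variable (K0 M : Type*) [Field K0] [Fintype K0] [Field M] [Fintype M] [Algebra K0 M]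

lemma exists_frob : ∃ σ : M ≃ₐ[K0] M, ∀ x : M, σ x = x ^ Fintype.card K0 := by
  obtain ⟨p, hp⟩ := CharP.exists K0
  haveI : CharP K0 p := hp
  haveI hF : Fact p.Prime := ⟨CharP.char_is_prime K0 p⟩
  haveI : CharP M p := charP_of_injective_algebraMap (algebraMap K0 M).injective p
  obtain ⟨n, hn⟩ := FiniteField.card K0 p
  refine ⟨AlgEquiv.ofBijective
    { toRingHom := iterateFrobenius M p n.1
      commutes' := fun c => ?_ } ?_, fun x => ?_⟩
  · show iterateFrobenius M p (n : ℕ) (algebraMap K0 M c) = algebraMap K0 M c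
    rw [iterateFrobenius_def, ← map_pow, ← hn.2, FiniteField.pow_card]
  · exact (Finite.injective_iff_bijective).mp (RingHom.injective _)
  · show iterateFrobenius M p (n : ℕ) x = x ^ Fintype.card K0
    rw [iterateFrobenius_def, hn.2]

lemma norm_eq_pow_geomSum (α : M) :
    algebraMap K0 M (Algebra.norm K0 α) =
      α ^ (∑ i ∈ range (finrank K0 M), Fintype.card K0 ^ i) := by
  obtain ⟨σ, hσ⟩ := exists_frob K0 M
  set q0 := Fintype.card K0 with hq0
  set d := finrank K0 M with hd
  have hq1 : 1 < q0 := Fintype.one_lt_card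
  have hpow : ∀ (i : ℕ) (x : M), (σ ^ i) x = x ^ q0 ^ i := by
    intro i
    induction i with
    | zero => intro x; simp
    | succ i ih =>
      intro x
      rw [pow_succ, AlgEquiv.mul_apply, hσ, ih, ← pow_mul, ← pow_succ']
  have hcardM : Fintype.card M = q0 ^ d := card_eq_pow_finrank (K := K0) (V := M)
  have hlt : ∀ i, 0 < i → i < d → σ ^ i ≠ 1 := by
    intro i hi0 hid h1
    obtain ⟨g, hg⟩ := IsCyclic.exists_generator (α := Mˣ)
    have hgx : ((g : M)) ^ q0 ^ i = (g : M) := by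
      have := congrArg (fun τ : M ≃ₐ[K0] M => τ (g : M)) h1
      simpa [hpow i] using this
    have hgu : g ^ (q0 ^ i - 1) = 1 := by
      have h1le : 1 ≤ q0 ^ i := Nat.one_le_pow _ _ (by omega)
      apply Units.ext
      push_cast [Units.val_pow_eq_pow_val]
      rw [← Nat.sub_add_cancel h1le] at hgx
      rw [pow_add, pow_one] at hgx
      field_simp at hgx ⊢
      exact hgx
    have hord : orderOf g = Nat.card Mˣ := orderOf_eq_card_of_forall_mem_zpowers hg
    have hdvd := orderOf_dvd_of_pow_eq_one hgu
    rw [hord] at hdvd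
    have hle : Nat.card Mˣ ≤ q0 ^ i - 1 :=
      Nat.le_of_dvd (by have h2 : 1 < q0 ^ i := Nat.one_lt_pow hi0.ne' hq1; omega) hdvd
    rw [Nat.card_units, Nat.card_eq_fintype_card, hcardM] at hle
    have hlt2 : q0 ^ i < q0 ^ d := Nat.pow_lt_pow_right hq1 hid
    have h3 : 1 ≤ q0 ^ d := Nat.one_le_pow _ _ (by omega)
    have h4 : 1 ≤ q0 ^ i := Nat.one_le_pow _ _ (by omega)
    generalize hA : q0 ^ i = A at *
    generalize hB : q0 ^ d = B at *
    omega
  have hd0 : 0 < d := finrank_pos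
  have hσd : σ ^ d = 1 := by
    ext x
    simp only [hpow d, ← hcardM, AlgEquiv.one_apply]
    exact FiniteField.pow_card x
  have hord : orderOf σ = d := by
    have h1 := orderOf_dvd_of_pow_eq_one hσd
    rcases Nat.lt_or_ge (orderOf σ) d with h | h
    · have h0 : 0 < orderOf σ := orderOf_pos σ
      exact absurd (pow_orderOf_eq_one σ) (hlt _ h0 h)
    · exact Nat.le_antisymm (Nat.le_of_dvd hd0 h1) h
  have hbij : Function.Bijective (fun i : Fin d => σ ^ (i : ℕ)) := by
    rw [Fintype.bijective_iff_injective_and_card]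
    constructor
    · intro i j hij
      exact Fin.ext (pow_injOn_Iio_orderOf (by simp [hord, i.2])
        (by simp [hord, j.2]) hij)
    · rw [Fintype.card_fin, ← Nat.card_eq_fintype_card, IsGalois.card_aut_eq_finrank]
  rw [Algebra.norm_eq_prod_automorphisms]
  rw [← Fintype.prod_bijective _ hbij _ (fun τ => τ α) (fun i => rfl)]
  simp only [hpow]
  rw [Finset.prod_pow_eq_pow_sum, Fin.sum_univ_eq_sum_range]

lemma aux_geom (q d : ℕ) (hq : 1 ≤ q) :
    (∑ i ∈ Finset.range d, q ^ i) * (q - 1) = q ^ d - 1 := by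
  have h1 : 1 ≤ q ^ d := Nat.one_le_pow _ _ (by omega)
  zify [hq, h1]
  exact geom_sum_mul _ _

lemma aux_mem_iff_pow {M : Type*} [Field M] [Fintype M] (H : Subgroup Mˣ) (y : Mˣ) :
    y ∈ H ↔ y ^ Nat.card H = 1 := by
  classical
  constructor
  · intro hy
    have h : (⟨y, hy⟩ : H) ^ Nat.card H = 1 := pow_card_eq_one'
    simpa only [SubmonoidClass.coe_pow, OneMemClass.coe_one] using congrArg (Subtype.val) h
  · intro hy
    set t := Nat.card H with htdef
    have ht0 : 0 < t := Nat.card_pos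
    set S : Finset Mˣ := Finset.univ.filter (fun x : Mˣ => x ^ t = 1) with hS
    have hle : S.card ≤ t := by
      simpa [hS] using IsCyclic.card_pow_eq_one_le (α := Mˣ) ht0
    have hsubset : (H : Set Mˣ).toFinset ⊆ S := by
      intro x hx
      rw [Set.mem_toFinset] at hx
      have h : (⟨x, hx⟩ : H) ^ t = 1 := pow_card_eq_one'
      simp only [hS, Finset.mem_filter, Finset.mem_univ, true_and]
      simpa using congrArg (Subtype.val) h
    have hcard : (H : Set Mˣ).toFinset.card = t := by
      rw [Set.toFinset_card, htdef, Nat.card_eq_fintype_card]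
      rfl
    have heq : (H : Set Mˣ).toFinset = S :=
      Finset.eq_of_subset_of_card_le hsubset (by rw [hcard]; exact hle)
    have : y ∈ S := by simp [hS, hy]
    rw [← heq, Set.mem_toFinset] at this
    exact this

end Aux

/-- For finite fields `F_{q_0} ⊆ F_{q^d} ⊆ F_{q^s}` and a subgroup `T ≤ F_{q_0}^*`,
the number of `α ∈ F_{q^d}^*` with `N_{F_{q^s}/F_{q_0}}(α) ∈ T` equals
`((q^d - 1)|T|/(q_0 - 1)) · gcd(s/d, (q_0 - 1)/|T|)`. -/
theorem stmt_5 (K0 M L : Type*) [Field K0] [Fintype K0] [Field M] [Fintype M]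
    [Field L] [Fintype L] [Algebra K0 M] [Algebra M L] [Algebra K0 L]
    [IsScalarTower K0 M L] (T : Subgroup K0ˣ) :
    Nat.card {α : Mˣ //
        Units.map ((Algebra.norm K0 : L →* K0).comp
          (algebraMap M L : M →+* L).toMonoidHom) α ∈ T} * (Fintype.card K0 - 1) =
      (Fintype.card M - 1) * Nat.card T *
        Nat.gcd (Module.finrank M L) ((Fintype.card K0 - 1) / Nat.card T) := by
  classical
  set q0 := Fintype.card K0 with hq0
  set m := q0 - 1 with hm
  set n := finrank M L with hn
  set t := Nat.card T with ht
  set k := ∑ i ∈ range (finrank K0 M), q0 ^ i with hk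
  set f : Mˣ →* K0ˣ := Units.map ((Algebra.norm K0 : L →* K0).comp
      (algebraMap M L : M →+* L).toMonoidHom) with hf
  set j : K0ˣ →* Mˣ := Units.map (algebraMap K0 M).toMonoidHom with hj
  have hjinj : Function.Injective j := Units.map_injective (algebraMap K0 M).injective
  -- the key formula : j (f α) = α ^ (k * n)
  have hkey : ∀ α : Mˣ, j (f α) = α ^ (k * n) := by
    intro α
    apply Units.ext
    have hval : ((f α : K0ˣ) : K0) = Algebra.norm K0 (algebraMap M L (α : M)) := rfl
    have h1 : Algebra.norm K0 (algebraMap M L (α : M)) =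
        (Algebra.norm K0 (α : M)) ^ n := by
      rw [← Algebra.norm_norm (R := K0) (S := M) (A := L) (a := algebraMap M L (α : M)),
        Algebra.norm_algebraMap, map_pow]
    calc ((j (f α) : Mˣ) : M) = algebraMap K0 M ((f α : K0ˣ) : K0) := rfl
      _ = algebraMap K0 M ((Algebra.norm K0 (α : M)) ^ n) := by rw [hval, h1]
      _ = (algebraMap K0 M (Algebra.norm K0 (α : M))) ^ n := by rw [map_pow]
      _ = ((α : M) ^ k) ^ n := by rw [norm_eq_pow_geomSum]
      _ = (α : M) ^ (k * n) := by rw [← pow_mul]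
      _ = ((α ^ (k * n) : Mˣ) : M) := by rw [Units.val_pow_eq_pow_val]
  -- card of T.map j is t, and membership there is a power condition
  set T' : Subgroup Mˣ := T.map j with hT'
  have hcardT' : Nat.card T' = t := by
    rw [ht]
    exact (Nat.card_congr (Subgroup.equivMapOfInjective T j hjinj).toEquiv).symm
  have hmemT' : ∀ y : Mˣ, y ∈ T' ↔ y ^ t = 1 := by
    intro y
    rw [aux_mem_iff_pow T' y, hcardT']
  -- membership condition as a power condition
  have hiff : ∀ α : Mˣ, (f α ∈ T ↔ α ^ (k * n * t) = 1) := by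
    intro α
    rw [← Subgroup.mem_map_iff_mem hjinj (K := T) (x := f α), ← hT', hmemT', hkey,
      ← pow_mul]
  have hcount : Nat.card {α : Mˣ // f α ∈ T} = Nat.gcd (k * n * t) (Fintype.card Mˣ) := by
    rw [Nat.card_congr (Equiv.subtypeEquivRight hiff)]
    exact aux_card_pow_eq_one (k * n * t)
  -- numerics
  have hq1 : 1 < q0 := Fintype.one_lt_card
  have hcardMu : Fintype.card Mˣ = Fintype.card M - 1 := by
    rw [← Nat.card_eq_fintype_card, Nat.card_units, Nat.card_eq_fintype_card]
  have hkm : k * m = Fintype.card M - 1 := by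
    rw [hk, hm, aux_geom q0 (finrank K0 M) (by omega),
      card_eq_pow_finrank (K := K0) (V := M)]
  have htdvd : t ∣ m := by
    have h6 := Subgroup.card_subgroup_dvd_card T
    have h5 : Nat.card K0ˣ = m := by
      rw [Nat.card_units, Nat.card_eq_fintype_card]
    rwa [h5, ← ht] at h6
  have ht0 : 0 < t := Nat.card_pos
  rw [hcount, hcardMu, ← hkm]
  have hgcd : Nat.gcd (k * n * t) (k * m) = k * (Nat.gcd n (m / t) * t) := by
    rw [mul_assoc, Nat.gcd_mul_left]
    congr 1
    have e1 : Nat.gcd (n * t) ((m / t) * t) = Nat.gcd n (m / t) * t := Nat.gcd_mul_right ..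
    rw [← e1, Nat.div_mul_cancel htdvd]
  rw [hgcd]
  ring
end

section
/- Let F_{q_0} ⊆ F_q ⊆ F_{q^s} be finite fields with q = q_0^r and let T be a subgroup of F_{q_0}^*. Then the number of elements α ∈ F_{q^s} of degree exactly s over F_q whose norm N_{F_{q^s}/F_{q_0}}(α) lies in T equals (|T|/(q_0-1)) · Σ_{d|s} μ(s/d)·(q^d - 1)·gcd(s/d, (q_0-1)/|T|). -/
open Polynomial Finset IntermediateField


/-- If every element of a finset of a field satisfies `x ^ c = x` with `1 < c`,
then the finset has at most `c` elements. -/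
lemma card_le_of_pow_eq_self {E : Type*} [Field E] {c : ℕ} (hc : 1 < c)
    (s : Finset E) (h : ∀ x ∈ s, x ^ c = x) : s.card ≤ c := by
  classical
  have hP : ((X : E[X]) ^ c - X) ≠ 0 := by
    intro h0
    have := congrArg Polynomial.natDegree h0
    rw [FiniteField.X_pow_card_sub_X_natDegree_eq E hc, Polynomial.natDegree_zero] at this
    omega
  have hsub : s ⊆ ((X : E[X]) ^ c - X).roots.toFinset := by
    intro x hx
    rw [Multiset.mem_toFinset, Polynomial.mem_roots hP]
    simp [sub_eq_zero, h x hx]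
  calc s.card ≤ ((X : E[X]) ^ c - X).roots.toFinset.card := Finset.card_le_card hsub
    _ ≤ Multiset.card ((X : E[X]) ^ c - X).roots := Multiset.toFinset_card_le _
    _ ≤ ((X : E[X]) ^ c - X).natDegree := Polynomial.card_roots' _
    _ = c := FiniteField.X_pow_card_sub_X_natDegree_eq E hc

section Frob
variable (F E : Type*) [Field F] [Fintype F] [Field E] [Fintype E] [Algebra F E]

/-- The Frobenius `x ↦ x ^ |F|` as an `F`-algebra endomorphism of `E`. -/
noncomputable def frobAlgHom : E →ₐ[F] E where
  toFun := fun x => x ^ Fintype.card F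
  map_one' := one_pow _
  map_mul' := fun x y => mul_pow x y _
  map_zero' := zero_pow Fintype.card_ne_zero
  map_add' := fun x y => by
    haveI : CharP E (ringChar F) :=
      charP_of_injective_algebraMap (algebraMap F E).injective (ringChar F)
    obtain ⟨a, hp_prime, hcard⟩ := FiniteField.card F (ringChar F)
    haveI : Fact (Nat.Prime (ringChar F)) := ⟨hp_prime⟩
    rw [hcard]
    exact add_pow_char_pow x y (ringChar F) (a : ℕ)
  commutes' := fun c => by
    rw [← map_pow, FiniteField.pow_card]

/-- The Frobenius `x ↦ x ^ |F|` as an `F`-algebra equivalence of `E`. -/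
noncomputable def frobAlgEquiv : E ≃ₐ[F] E :=
  AlgEquiv.ofBijective (frobAlgHom F E)
    ((Finite.injective_iff_bijective).1 (frobAlgHom F E).toRingHom.injective)

lemma frobAlgEquiv_apply (x : E) : frobAlgEquiv F E x = x ^ Fintype.card F := rfl

end Frob

section Norm
variable (F E : Type*) [Field F] [Fintype F] [Field E] [Fintype E] [Algebra F E]

lemma frobAlgEquiv_pow_apply (i : ℕ) (x : E) :
    ((frobAlgEquiv F E) ^ i) x = x ^ (Fintype.card F ^ i) := by
  induction i with
  | zero => simp
  | succ i ih =>
    rw [pow_succ', AlgEquiv.mul_apply, frobAlgEquiv_apply, ih, ← pow_mul, ← pow_succ]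

lemma orderOf_frobAlgEquiv : orderOf (frobAlgEquiv F E) = Module.finrank F E := by
  set n := Module.finrank F E with hn
  have hn0 : 0 < n := Module.finrank_pos
  have hq0 : 1 < Fintype.card F := Fintype.one_lt_card
  have hcardE : Fintype.card E = Fintype.card F ^ n := Module.card_eq_pow_finrank
  have cardG : Fintype.card (E ≃ₐ[F] E) = n := Nat.card_eq_fintype_card.symm.trans (IsGalois.card_aut_eq_finrank F E)
  have hdvd : orderOf (frobAlgEquiv F E) ∣ n := cardG ▸ orderOf_dvd_card
  set o := orderOf (frobAlgEquiv F E) with ho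
  have ho0 : 0 < o := orderOf_pos _
  have hfix : ∀ x : E, x ^ (Fintype.card F ^ o) = x := by
    intro x
    have h1 : ((frobAlgEquiv F E) ^ o) x = x := by rw [pow_orderOf_eq_one]; rfl
    rwa [frobAlgEquiv_pow_apply] at h1
  have hle : Fintype.card E ≤ Fintype.card F ^ o := by
    apply card_le_of_pow_eq_self (Nat.one_lt_pow ho0.ne' hq0) Finset.univ
    exact fun x _ => hfix x
  rw [hcardE] at hle
  have : n ≤ o := (Nat.pow_le_pow_iff_right hq0).1 hle
  exact Nat.le_antisymm (Nat.le_of_dvd hn0 hdvd) this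

lemma norm_eq_pow_geomSum_s6 (x : E) :
    algebraMap F E (Algebra.norm F x) =
      x ^ (∑ i ∈ Finset.range (Module.finrank F E), Fintype.card F ^ i) := by
  classical
  set n := Module.finrank F E with hn
  have horder : orderOf (frobAlgEquiv F E) = n := orderOf_frobAlgEquiv F E
  have cardG : Fintype.card (E ≃ₐ[F] E) = n := Nat.card_eq_fintype_card.symm.trans (IsGalois.card_aut_eq_finrank F E)
  have hinj : Set.InjOn (frobAlgEquiv F E ^ ·) (Finset.range n : Set ℕ) := by
    intro i hi j hj hij
    exact pow_injOn_Iio_orderOf (by simpa [horder] using hi) (by simpa [horder] using hj) hij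
  have himg : (Finset.range n).image (frobAlgEquiv F E ^ ·) = Finset.univ := by
    apply Finset.eq_univ_of_card
    rw [Finset.card_image_of_injOn hinj, Finset.card_range, cardG]
  rw [Algebra.norm_eq_prod_automorphisms, ← himg, Finset.prod_image hinj]
  simp_rw [frobAlgEquiv_pow_apply]
  rw [Finset.prod_pow_eq_pow_sum]

end Norm


open Subgroup in
lemma card_pow_eq_one_cyclic (G : Type*) [Group G] [Fintype G] [IsCyclic G] (k : ℕ) :
    Nat.card {x : G // x ^ k = 1} = Nat.gcd k (Fintype.card G) := by
  classical
  obtain ⟨g, hg⟩ := IsCyclic.exists_generator (α := G)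
  set N := Fintype.card G with hN
  have hN0 : 0 < N := Fintype.card_pos
  set d := Nat.gcd k N with hd
  have hdN : d ∣ N := Nat.gcd_dvd_right k N
  have hd0 : 0 < d := Nat.gcd_pos_of_pos_right _ hN0
  -- x ^ k = 1 ↔ x ^ d = 1
  have key : ∀ x : G, x ^ k = 1 ↔ x ^ d = 1 := by
    intro x
    constructor
    · intro h
      exact orderOf_dvd_iff_pow_eq_one.1 <| Nat.dvd_gcd (orderOf_dvd_iff_pow_eq_one.2 h)
        (orderOf_dvd_card)
    · intro h
      exact orderOf_dvd_iff_pow_eq_one.1 <| (orderOf_dvd_iff_pow_eq_one.2 h).trans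
        (Nat.gcd_dvd_left k N)
  have horder : orderOf g = N :=
    (orderOf_eq_card_of_forall_mem_zpowers hg).trans Nat.card_eq_fintype_card
  have ha : orderOf (g ^ (N / d)) = d := by
    rw [orderOf_pow, horder, Nat.gcd_eq_right (Nat.div_dvd_of_dvd hdN),
      Nat.div_div_self hdN hN0.ne']
  -- {x | x ^ d = 1} = zpowers (g ^ (N/d))
  have hset : ∀ x : G, x ^ d = 1 ↔ x ∈ zpowers (g ^ (N / d)) := by
    intro x
    constructor
    · intro h
      obtain ⟨j, hj⟩ := mem_powers_iff_mem_zpowers.2 (hg x)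
      simp only at hj
      have hNjd : N ∣ j * d := by
        have : orderOf g ∣ j * d := orderOf_dvd_iff_pow_eq_one.2 (by rw [pow_mul, hj, h])
        rwa [horder] at this
      have hdvd : N / d ∣ j := by
        have h1 : (N / d) * d ∣ j * d := by rwa [Nat.div_mul_cancel hdN]
        exact (Nat.mul_dvd_mul_iff_right hd0).1 h1
      refine mem_powers_iff_mem_zpowers.1 ⟨j / (N / d), ?_⟩
      show (g ^ (N / d)) ^ (j / (N / d)) = x
      rw [← pow_mul, Nat.mul_div_cancel' hdvd, hj]
    · intro hx
      obtain ⟨j, hj⟩ := hx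
      simp only at hj
      subst hj
      show ((g ^ (N / d)) ^ j) ^ (d : ℕ) = 1
      have h1 : ((g ^ (N / d)) ^ j) ^ (d : ℕ) = ((g ^ (N / d)) ^ (d : ℕ)) ^ j := by
        rw [← zpow_natCast ((g ^ (N / d)) ^ j), ← zpow_mul, mul_comm,
          zpow_mul, zpow_natCast]
      have h2 : (g ^ (N / d)) ^ (d : ℕ) = 1 := by
        rw [← pow_mul, Nat.div_mul_cancel hdN]
        exact pow_card_eq_one
      rw [h1, h2, one_zpow]
  calc Nat.card {x : G // x ^ k = 1}
      = Nat.card {x : G // x ∈ zpowers (g ^ (N / d))} := by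
        apply Nat.card_congr
        exact Equiv.subtypeEquivRight (fun x => (key x).trans (hset x))
    _ = orderOf (g ^ (N / d)) := Nat.card_zpowers _
    _ = d := ha


lemma pow_gcd_modeq (q M : ℕ) : ∀ n d : ℕ, q ^ n ≡ 1 [MOD M] → q ^ d ≡ 1 [MOD M] →
    q ^ (Nat.gcd n d) ≡ 1 [MOD M] := by
  intro n
  induction n using Nat.strong_induction_on with
  | _ n ih =>
    intro d hn hd
    rcases Nat.eq_zero_or_pos n with rfl | hn0
    · rwa [Nat.gcd_zero_left]
    · rw [Nat.gcd_rec n d]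
      have h1 : (q ^ n) ^ (d / n) ≡ 1 [MOD M] := by
        simpa using hn.pow (d / n)
      have h2 : q ^ (d % n) * (q ^ n) ^ (d / n) = q ^ d := by
        rw [← pow_mul, ← pow_add, Nat.mod_add_div]
      have h3 : q ^ (d % n) ≡ 1 [MOD M] :=
        calc q ^ (d % n) = q ^ (d % n) * 1 := (mul_one _).symm
          _ ≡ q ^ (d % n) * (q ^ n) ^ (d / n) [MOD M] := (Nat.ModEq.mul_left _ h1.symm)
          _ = q ^ d := h2
          _ ≡ 1 [MOD M] := hd
      exact ih (d % n) (Nat.mod_lt d hn0) n h3 hn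

lemma pow_pow_eq_self {L : Type*} [Monoid L] (a : L) (c k : ℕ) (h : a ^ c = a) :
    a ^ (c ^ k) = a := by
  induction k with
  | zero => simpa using h
  | succ k ih => rw [pow_succ, pow_mul, ih, h]

section DegreeIff

variable (K L : Type*) [Field K] [Fintype K] [Field L] [Fintype L] [Algebra K L]

/-- The subfield of elements fixed by the `g`-th power of Frobenius. -/
noncomputable def powFixed (g : ℕ) : IntermediateField K L where
  carrier := {x : L | x ^ (Fintype.card K ^ g) = x}
  mul_mem' := fun {a b} ha hb => by
    simp only [Set.mem_setOf_eq] at *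
    rw [mul_pow, ha, hb]
  one_mem' := by simp
  add_mem' := fun {a b} ha hb => by
    simp only [Set.mem_setOf_eq] at *
    haveI : CharP L (ringChar K) :=
      charP_of_injective_algebraMap (algebraMap K L).injective (ringChar K)
    obtain ⟨v, hp_prime, hcard⟩ := FiniteField.card K (ringChar K)
    haveI : Fact (Nat.Prime (ringChar K)) := ⟨hp_prime⟩
    rw [hcard, ← pow_mul, add_pow_char_pow a b (ringChar K) ((v : ℕ) * g), pow_mul, ← hcard, ha, hb]
  zero_mem' := by
    simp only [Set.mem_setOf_eq]
    rw [zero_pow]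
    positivity
  algebraMap_mem' := fun c => by
    simp only [Set.mem_setOf_eq]
    rw [← map_pow, FiniteField.pow_card_pow]
  inv_mem' := fun x hx => by
    simp only [Set.mem_setOf_eq] at *
    rw [inv_pow, hx]

lemma mem_powFixed {g : ℕ} {x : L} : x ∈ powFixed K L g ↔ x ^ (Fintype.card K ^ g) = x :=
  Iff.rfl

lemma pow_card_pow_natDegree (α : L) :
    α ^ (Fintype.card K ^ (minpoly K α).natDegree) = α := by
  classical
  have hint : IsIntegral K α := IsIntegral.of_finite K α
  set n := (minpoly K α).natDegree with hn
  have hrank : Module.finrank K K⟮α⟯ = n := IntermediateField.adjoin.finrank hint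
  haveI : Fintype K⟮α⟯ := Fintype.ofFinite _
  have hcard : Fintype.card K⟮α⟯ = Fintype.card K ^ n := by
    rw [Module.card_eq_pow_finrank (K := K) (V := K⟮α⟯), hrank]
  have hgen : (IntermediateField.AdjoinSimple.gen K α) ^ (Fintype.card K ^ n)
      = IntermediateField.AdjoinSimple.gen K α := by
    rw [← hcard]; exact FiniteField.pow_card _
  have := congrArg (algebraMap K⟮α⟯ L) hgen
  rwa [map_pow, IntermediateField.AdjoinSimple.algebraMap_gen] at this

lemma natDegree_minpoly_dvd_iff (α : L) (d : ℕ) (hd : 0 < d) :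
    (minpoly K α).natDegree ∣ d ↔ α ^ (Fintype.card K ^ d) = α := by
  classical
  set q := Fintype.card K with hq
  have hq1 : 1 < q := Fintype.one_lt_card
  set n := (minpoly K α).natDegree with hn
  have hbase : α ^ (q ^ n) = α := pow_card_pow_natDegree K L α
  constructor
  · rintro ⟨k, rfl⟩
    rw [pow_mul]
    exact pow_pow_eq_self α (q ^ n) k hbase
  · intro h
    rcases eq_or_ne α 0 with rfl | hα
    · have : n = 1 := by rw [hn, minpoly.zero, natDegree_X]
      rw [this]; exact one_dvd d
    -- α ≠ 0
    set x : Lˣ := Units.mk0 α hα with hx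
    have hxpow : ∀ c : ℕ, 0 < c → α ^ (q ^ c) = α → x ^ (q ^ c - 1) = 1 := by
      intro c hc hfix
      have h1 : x ^ (q ^ c - 1) * x = x := by
        apply Units.ext
        push_cast
        rw [← pow_succ, Nat.sub_add_cancel (Nat.one_le_pow _ _ Fintype.card_pos)]
        exact hfix
      calc x ^ (q ^ c - 1) = x ^ (q ^ c - 1) * x * x⁻¹ := by group
        _ = x * x⁻¹ := by rw [h1]
        _ = 1 := mul_inv_cancel x
    have hn0 : 0 < n := minpoly.natDegree_pos (IsIntegral.of_finite K α)
    have hmod : ∀ c : ℕ, 0 < c → α ^ (q ^ c) = α → q ^ c ≡ 1 [MOD orderOf x] := by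
      intro c hc hfix
      have := orderOf_dvd_of_pow_eq_one (hxpow c hc hfix)
      exact (Nat.modEq_iff_dvd' (Nat.one_le_pow _ _ Fintype.card_pos)).2 this |>.symm
    have hg : q ^ (Nat.gcd n d) ≡ 1 [MOD orderOf x] :=
      pow_gcd_modeq q (orderOf x) n d (hmod n hn0 hbase) (hmod d hd h)
    set g := Nat.gcd n d with hgdef
    have hg0 : 0 < g := Nat.gcd_pos_of_pos_right _ hd
    have hfixg : α ^ (q ^ g) = α := by
      have hdvd : orderOf x ∣ q ^ g - 1 :=
        (Nat.modEq_iff_dvd' (Nat.one_le_pow _ _ Fintype.card_pos)).1 hg.symm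
      have h1 : x ^ (q ^ g - 1) = 1 := orderOf_dvd_iff_pow_eq_one.1 hdvd
      have h2 : x ^ (q ^ g) = x := by
        rw [show q ^ g = (q ^ g - 1) + 1 from (Nat.succ_pred_eq_of_pos (Nat.one_le_pow _ _ Fintype.card_pos)).symm, pow_succ, h1, one_mul]
      have := congrArg (Units.val) h2
      simpa [hx] using this
    -- α lies in powFixed g, so K⟮α⟯ ≤ powFixed g
    have hαmem : α ∈ powFixed K L g := hfixg
    have hle : K⟮α⟯ ≤ powFixed K L g := by
      rw [IntermediateField.adjoin_le_iff]
      intro y hy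
      rw [Set.mem_singleton_iff] at hy
      subst hy
      exact hαmem
    -- cards
    haveI : Fintype K⟮α⟯ := Fintype.ofFinite _
    haveI : Fintype (powFixed K L g) := Fintype.ofFinite _
    have hcard1 : Fintype.card K⟮α⟯ = q ^ n := by
      rw [Module.card_eq_pow_finrank (K := K) (V := K⟮α⟯),
        IntermediateField.adjoin.finrank (IsIntegral.of_finite K α)]
    have hcard2 : Fintype.card (powFixed K L g) ≤ q ^ g := by
      classical
      have : Fintype.card (powFixed K L g) = (Set.toFinset {x : L | x ^ (q ^ g) = x}).card := by
        rw [Set.toFinset_card]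
        exact Fintype.card_congr (Equiv.subtypeEquivRight fun y => Iff.rfl)
      rw [this]
      apply card_le_of_pow_eq_self (Nat.one_lt_pow hg0.ne' hq1)
      intro y hy
      rwa [Set.mem_toFinset] at hy
    have hinj : Fintype.card K⟮α⟯ ≤ Fintype.card (powFixed K L g) := by
      apply Fintype.card_le_of_injective
        (fun y : K⟮α⟯ => (⟨y.1, hle y.2⟩ : powFixed K L g))
      intro a b hab
      simp only [Subtype.mk.injEq] at hab
      exact Subtype.ext hab
    have : q ^ n ≤ q ^ g := by
      calc q ^ n = Fintype.card K⟮α⟯ := hcard1.symm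
        _ ≤ Fintype.card (powFixed K L g) := hinj
        _ ≤ q ^ g := hcard2
    have hng : n ≤ g := (Nat.pow_le_pow_iff_right hq1).1 this
    have : n = g := Nat.le_antisymm hng (Nat.le_of_dvd hn0 (Nat.gcd_dvd_left n d))
    rw [this]
    exact Nat.gcd_dvd_right n d

end DegreeIff


lemma geom_nat (a k : ℕ) (ha : 1 ≤ a) :
    (∑ i ∈ Finset.range k, a ^ i) * (a - 1) = a ^ k - 1 := by
  have h1 : (1 : ℕ) ≤ a ^ k := Nat.one_le_pow _ _ ha
  have : ((∑ i ∈ Finset.range k, a ^ i) * (a - 1) : ℕ) = ((a ^ k - 1 : ℕ) : ℤ) → _ := id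
  apply Nat.cast_injective (R := ℤ)
  push_cast [Nat.cast_sub ha, Nat.cast_sub h1]
  exact geom_sum_mul (a : ℤ) k

lemma gcd_eq_of_modeq {n a b : ℕ} (h : a ≡ b [MOD n]) : Nat.gcd n a = Nat.gcd n b := by
  rw [Nat.gcd_rec n a, Nat.gcd_rec n b, h]

lemma key_arith {q e t s d m : ℕ} (hq : 2 ≤ q) (he : 0 < e) (ht0 : 0 < t) (ht : t ∣ e)
    (heq : e ∣ q - 1) (hd : d ∣ s) (hd0 : 0 < d) (hm : m * e = q ^ s - 1) :
    e * Nat.gcd (q ^ d - 1) (m * t) = t * ((q ^ d - 1) * Nat.gcd (s / d) (e / t)) := by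
  obtain ⟨k, hk⟩ := hd
  have hq1 : 1 ≤ q := by omega
  have hqd : 1 ≤ q ^ d := Nat.one_le_pow _ _ (by omega)
  set nd := q ^ d - 1 with hnd
  set M := ∑ i ∈ Finset.range k, (q ^ d) ^ i with hM
  have hgeom : M * nd = q ^ s - 1 := by
    rw [hM, hnd, geom_nat (q ^ d) k hqd, ← pow_mul, ← hk]
  have hend : e ∣ nd := by
    refine heq.trans ?_
    simpa using Nat.sub_dvd_pow_sub_pow q 1 d
  have hkd : s / d = k := by rw [hk, Nat.mul_div_cancel_left k hd0]
  -- m = (nd / e) * M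
  have hmeq : m = nd / e * M := by
    have h1 : m * e = (nd / e * M) * e := by
      rw [hm, ← hgeom, mul_comm M nd, mul_assoc, mul_comm M e, ← mul_assoc,
        Nat.div_mul_cancel hend]
    exact Nat.eq_of_mul_eq_mul_right he h1
  -- gcd nd (m t) = (nd/e) * gcd e (M t)
  have hnd_eq : nd = nd / e * e := (Nat.div_mul_cancel hend).symm
  have hgcd1 : Nat.gcd nd (m * t) = nd / e * Nat.gcd e (M * t) := by
    calc Nat.gcd nd (m * t) = Nat.gcd (nd / e * e) (nd / e * (M * t)) := by
          rw [← hnd_eq, hmeq, mul_assoc]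
      _ = nd / e * Nat.gcd e (M * t) := Nat.gcd_mul_left _ _ _
  -- M ≡ k [MOD e]
  have hMk : M ≡ k [MOD e] := by
    have hqe : q ≡ 1 [MOD e] := ((Nat.modEq_iff_dvd' hq1).2 heq).symm
    have : (M : ZMod e) = (k : ZMod e) := by
      rw [hM]
      push_cast
      have hq_cast : (q : ZMod e) = 1 := by
        have := (ZMod.natCast_eq_natCast_iff _ _ _).2 hqe
        simpa using this
      simp [hq_cast]
    exact (ZMod.natCast_eq_natCast_iff _ _ _).1 this
  have hgcd2 : Nat.gcd e (M * t) = Nat.gcd e (k * t) := gcd_eq_of_modeq (hMk.mul_right t)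
  have hgcd3 : Nat.gcd e (k * t) = t * Nat.gcd (e / t) k := by
    calc Nat.gcd e (k * t) = Nat.gcd (t * (e / t)) (t * k) := by
          rw [Nat.mul_div_cancel' ht, mul_comm k t]
      _ = t * Nat.gcd (e / t) k := Nat.gcd_mul_left _ _ _
  calc e * Nat.gcd nd (m * t) = e * (nd / e * (t * Nat.gcd (e / t) k)) := by
        rw [hgcd1, hgcd2, hgcd3]
    _ = (nd / e * e) * (t * Nat.gcd (e / t) k) := by ring
    _ = nd * (t * Nat.gcd (e / t) k) := by rw [← hnd_eq]
    _ = t * (nd * Nat.gcd (s / d) (e / t)) := by rw [hkd, Nat.gcd_comm]; ring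


lemma mem_subgroup_iff_pow_card_eq_one {G : Type*} [Group G] [Fintype G] [IsCyclic G]
    (T : Subgroup G) (hcount : ∀ k : ℕ, Nat.card {x : G // x ^ k = 1} = Nat.gcd k (Fintype.card G))
    (x : G) : x ∈ T ↔ x ^ Nat.card T = 1 := by
  classical
  set t := Nat.card T with ht
  constructor
  · intro hx
    have : (⟨x, hx⟩ : T) ^ t = 1 := pow_card_eq_one'
    simpa [Subtype.ext_iff] using this
  · intro hx
    have htN : t ∣ Fintype.card G := by
      rw [← Nat.card_eq_fintype_card]; exact Subgroup.card_subgroup_dvd_card T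
    have hsub : (T : Set G) ⊆ {y : G | y ^ t = 1} := by
      intro y hy
      have : (⟨y, hy⟩ : T) ^ t = 1 := pow_card_eq_one'
      simpa [Subtype.ext_iff] using this
    have hcardB : ({y : G | y ^ t = 1} : Set G).ncard = t := by
      rw [← Nat.card_coe_set_eq]
      have := hcount t
      simpa [Nat.gcd_eq_left htN, Fintype.card_subtype] using this
    have hcardA : (T : Set G).ncard = t := by
      rw [← Nat.card_coe_set_eq]; exact rfl
    have heq : (T : Set G) = {y : G | y ^ t = 1} :=
      Set.eq_of_subset_of_ncard_le hsub (by rw [hcardA, hcardB])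
    have : x ∈ (T : Set G) := heq ▸ hx
    exact this

/-- For finite fields `F_{q_0} ⊆ F_q ⊆ F_{q^s}` and a subgroup `T ≤ F_{q_0}^*`,
the number of `α ∈ F_{q^s}` of degree exactly `s` over `F_q` with
`N_{F_{q^s}/F_{q_0}}(α) ∈ T` equals
`(|T|/(q_0-1)) ∑_{d ∣ s} μ(s/d)(q^d - 1) gcd(s/d, (q_0-1)/|T|)`. -/
theorem stmt_6 (K0 K L : Type*) [Field K0] [Fintype K0] [Field K] [Fintype K]
    [Field L] [Fintype L] [Algebra K0 K] [Algebra K L] [Algebra K0 L]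
    [IsScalarTower K0 K L] (s : ℕ) (hs : 1 ≤ s) (hdim : Module.finrank K L = s)
    (T : Subgroup K0ˣ) :
    (Nat.card {α : L // (minpoly K α).natDegree = s ∧
        ∃ u ∈ T, ((u : K0ˣ) : K0) = Algebra.norm K0 α} : ℤ) * (Fintype.card K0 - 1) =
      (Nat.card T : ℤ) * ∑ d ∈ s.divisors, ArithmeticFunction.moebius (s / d) *
        ((Fintype.card K : ℤ) ^ d - 1) *
        (Nat.gcd (s / d) ((Fintype.card K0 - 1) / Nat.card T) : ℤ) := by
  classical
  set q0 := Fintype.card K0 with hq0def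
  set q := Fintype.card K with hqdef
  set t := Nat.card T with htdef
  set e := q0 - 1 with hedef
  have hq0_1 : 1 < q0 := Fintype.one_lt_card
  have hq1 : 1 < q := Fintype.one_lt_card
  have he0 : 0 < e := by omega
  have ht0 : 0 < t := Nat.card_pos
  set n0 := Module.finrank K0 L with hn0def
  set m0 := ∑ i ∈ Finset.range n0, q0 ^ i with hm0def
  have hcardL : Fintype.card L = q ^ s := by
    rw [Module.card_eq_pow_finrank (K := K) (V := L), hdim]
  have hcardL0 : Fintype.card L = q0 ^ n0 := Module.card_eq_pow_finrank (K := K0) (V := L)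
  have hm0e : m0 * e = q ^ s - 1 := by
    rw [hm0def, hedef, geom_nat q0 n0 (le_of_lt hq0_1), ← hcardL0, hcardL]
  have hqs1 : 2 ≤ q ^ s := by
    calc 2 = 2 ^ 1 := rfl
    _ ≤ q ^ s := Nat.pow_le_pow_left hq1 1 |>.trans (Nat.pow_le_pow_right (by omega) hs)
  have hm00 : 0 < m0 := by
    rcases Nat.eq_zero_or_pos m0 with h | h
    · exfalso
      rw [h, zero_mul] at hm0e
      omega
    · exact h
  have hte : t ∣ e := by
    have h1 : Nat.card T ∣ Nat.card K0ˣ := Subgroup.card_subgroup_dvd_card T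
    have h2 : Nat.card K0ˣ = e := by
      rw [Nat.card_eq_fintype_card, Fintype.card_units]
    rwa [h2] at h1
  have heq : e ∣ q - 1 := by
    have h1 : Nat.card K0ˣ ∣ Nat.card Kˣ :=
      Subgroup.card_dvd_of_injective ((Units.map (algebraMap K0 K).toMonoidHom))
        (Units.map_injective (algebraMap K0 K).injective)
    rwa [Nat.card_eq_fintype_card, Nat.card_eq_fintype_card, Fintype.card_units,
      Fintype.card_units] at h1
  -- the norm condition, rephrased as a power condition
  have hnormpow : ∀ α : L, algebraMap K0 L (Algebra.norm K0 α) = α ^ m0 := fun α =>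
    norm_eq_pow_geomSum_s6 K0 L α
  have hPiff : ∀ α : L, (∃ u ∈ T, ((u : K0ˣ) : K0) = Algebra.norm K0 α) ↔
      (α ≠ 0 ∧ α ^ (m0 * t) = 1) := by
    intro α
    constructor
    · rintro ⟨u, hu, hval⟩
      have hut : ((u : K0ˣ) : K0) ^ t = 1 := by
        have h1 : (⟨u, hu⟩ : T) ^ t = 1 := pow_card_eq_one'
        have h2 : (u : K0ˣ) ^ t = 1 := by
          have := congrArg (Subtype.val) h1
          simpa using this
        have := congrArg (Units.val) h2
        simpa using this
      have hα0 : α ≠ 0 := by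
        intro h0
        have h1 : algebraMap K0 L (Algebra.norm K0 α) = 0 := by
          rw [hnormpow, h0, zero_pow hm00.ne']
        rw [← hval] at h1
        exact Units.ne_zero u ((_root_.map_eq_zero (algebraMap K0 L)).1 h1)
      refine ⟨hα0, ?_⟩
      have h2 : α ^ (m0 * t) = (algebraMap K0 L (Algebra.norm K0 α)) ^ t := by
        rw [hnormpow, ← pow_mul]
      rw [h2, ← hval, ← map_pow, hut, map_one]
    · rintro ⟨hα0, hpow⟩
      have hc : algebraMap K0 L (Algebra.norm K0 α) = α ^ m0 := hnormpow α
      have hct : (Algebra.norm K0 α) ^ t = 1 := by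
        apply (algebraMap K0 L).injective
        rw [map_pow, hc, ← pow_mul, hpow, map_one]
      have hc0 : Algebra.norm K0 α ≠ 0 := by
        intro h0
        rw [h0, map_zero] at hc
        exact hα0 (pow_eq_zero_iff hm00.ne' |>.1 hc.symm)
      refine ⟨Units.mk0 _ hc0, ?_, rfl⟩
      rw [mem_subgroup_iff_pow_card_eq_one T (card_pow_eq_one_cyclic K0ˣ)]
      apply Units.ext
      rw [Units.val_pow_eq_pow_val, Units.val_mk0, Units.val_one]
      exact hct
  have hcLu : Fintype.card Lˣ = q ^ s - 1 := by rw [Fintype.card_units, hcardL]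
  -- the count of elements of degree dividing d with norm condition
  have hcount : ∀ d : ℕ, d ∣ s → 0 < d →
      Nat.card {α : L // (minpoly K α).natDegree ∣ d ∧
        ∃ u ∈ T, ((u : K0ˣ) : K0) = Algebra.norm K0 α} = Nat.gcd (q ^ d - 1) (m0 * t) := by
    intro d hds hd0
    set c := Nat.gcd (q ^ d - 1) (m0 * t) with hcdef
    have hc_d : c ∣ q ^ d - 1 := Nat.gcd_dvd_left _ _
    have hc_mt : c ∣ m0 * t := Nat.gcd_dvd_right _ _
    have hqd1 : 1 ≤ q ^ d := Nat.one_le_pow _ _ (by omega)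
    have fwd : ∀ x : Lˣ, x ^ c = 1 → ((minpoly K ((x : Lˣ) : L)).natDegree ∣ d ∧
        ∃ u ∈ T, ((u : K0ˣ) : K0) = Algebra.norm K0 ((x : Lˣ) : L)) := by
      intro x hx
      have hxd : x ^ (q ^ d - 1) = 1 :=
        orderOf_dvd_iff_pow_eq_one.1 ((orderOf_dvd_of_pow_eq_one hx).trans hc_d)
      have hxmt : x ^ (m0 * t) = 1 :=
        orderOf_dvd_iff_pow_eq_one.1 ((orderOf_dvd_of_pow_eq_one hx).trans hc_mt)
      have hLd : ((x : Lˣ) : L) ^ (q ^ d - 1) = 1 := by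
        have := congrArg (Units.val) hxd
        simpa using this
      have hLfix : ((x : Lˣ) : L) ^ (q ^ d) = ((x : Lˣ) : L) := by
        rw [show q ^ d = (q ^ d - 1) + 1 from (Nat.succ_pred_eq_of_pos hqd1).symm,
          pow_succ, hLd, one_mul]
      refine ⟨(natDegree_minpoly_dvd_iff K L _ d hd0).2 hLfix, ?_⟩
      rw [hPiff]
      refine ⟨Units.ne_zero x, ?_⟩
      have := congrArg (Units.val) hxmt
      simpa using this
    have bwdnz : ∀ α : L, ((minpoly K α).natDegree ∣ d ∧
        ∃ u ∈ T, ((u : K0ˣ) : K0) = Algebra.norm K0 α) → α ≠ 0 :=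
      fun α h => ((hPiff α).1 h.2).1
    have bwd : ∀ (α : L) (h : (minpoly K α).natDegree ∣ d ∧
        ∃ u ∈ T, ((u : K0ˣ) : K0) = Algebra.norm K0 α),
        (Units.mk0 α (bwdnz α h)) ^ c = 1 := by
      intro α h
      obtain ⟨hα0, hαmt⟩ := (hPiff α).1 h.2
      set x := Units.mk0 α (bwdnz α h) with hxdef
      have hfix : α ^ (q ^ d) = α := (natDegree_minpoly_dvd_iff K L α d hd0).1 h.1
      have hxd : x ^ (q ^ d - 1) = 1 := by
        have h1 : x ^ (q ^ d - 1) * x = x := by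
          apply Units.ext
          push_cast
          rw [← pow_succ, Nat.sub_add_cancel hqd1]
          exact hfix
        calc x ^ (q ^ d - 1) = x ^ (q ^ d - 1) * x * x⁻¹ := by group
          _ = x * x⁻¹ := by rw [h1]
          _ = 1 := mul_inv_cancel x
      have hxmt : x ^ (m0 * t) = 1 := by
        apply Units.ext
        push_cast
        exact hαmt
      exact orderOf_dvd_iff_pow_eq_one.1
        (Nat.dvd_gcd (orderOf_dvd_of_pow_eq_one hxd) (orderOf_dvd_of_pow_eq_one hxmt))
    have hEquiv : {x : Lˣ // x ^ c = 1} ≃ {α : L // (minpoly K α).natDegree ∣ d ∧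
        ∃ u ∈ T, ((u : K0ˣ) : K0) = Algebra.norm K0 α} :=
      { toFun := fun x => ⟨((x : Lˣ) : L), fwd x.1 x.2⟩
        invFun := fun α => ⟨Units.mk0 α.1 (bwdnz α.1 α.2), bwd α.1 α.2⟩
        left_inv := fun x => Subtype.ext (Units.ext rfl)
        right_inv := fun α => Subtype.ext rfl }
    have hc_qs : c ∣ q ^ s - 1 := by
      refine hc_d.trans ?_
      have h2 := Nat.sub_dvd_pow_sub_pow (q ^ d) 1 (s / d)
      rwa [one_pow, ← pow_mul, Nat.mul_div_cancel' hds] at h2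
    rw [← Nat.card_congr hEquiv, card_pow_eq_one_cyclic Lˣ c, hcLu]
    exact Nat.gcd_eq_left hc_qs
  -- Möbius inversion setup
  have hpart : ∀ nn : ℕ, nn > 0 →
      ∑ i ∈ nn.divisors, (Nat.card {α : L // (minpoly K α).natDegree = i ∧
        ∃ u ∈ T, ((u : K0ˣ) : K0) = Algebra.norm K0 α} : ℤ)
      = (Nat.card {α : L // (minpoly K α).natDegree ∣ nn ∧
        ∃ u ∈ T, ((u : K0ˣ) : K0) = Algebra.norm K0 α} : ℤ) := by
    intro nn hnn
    have h0 : ∀ α ∈ Finset.univ.filter (fun α : L => (minpoly K α).natDegree ∣ nn ∧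
        ∃ u ∈ T, ((u : K0ˣ) : K0) = Algebra.norm K0 α),
        (minpoly K α).natDegree ∈ nn.divisors := by
      intro α hα
      simp only [Finset.mem_filter, Finset.mem_univ, true_and] at hα
      exact Nat.mem_divisors.2 ⟨hα.1, hnn.ne'⟩
    have key : (Finset.univ.filter (fun α : L => (minpoly K α).natDegree ∣ nn ∧
        ∃ u ∈ T, ((u : K0ˣ) : K0) = Algebra.norm K0 α)).card
        = ∑ i ∈ nn.divisors, (Finset.univ.filter (fun α : L =>
            (minpoly K α).natDegree = i ∧
            ∃ u ∈ T, ((u : K0ˣ) : K0) = Algebra.norm K0 α)).card := by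
      rw [Finset.card_eq_sum_card_fiberwise h0]
      apply Finset.sum_congr rfl
      intro i hi
      rw [Finset.filter_filter]
      congr 1
      ext α
      simp only [Finset.mem_filter, Finset.mem_univ, true_and]
      constructor
      · rintro ⟨⟨hdvd, hPα⟩, hdeg⟩
        exact ⟨hdeg, hPα⟩
      · rintro ⟨hdeg, hPα⟩
        exact ⟨⟨hdeg ▸ (Nat.mem_divisors.1 hi).1, hPα⟩, hdeg⟩
    simp only [Nat.card_eq_fintype_card, Fintype.card_subtype]
    rw [← Nat.cast_sum]
    exact congrArg (fun n : ℕ => (n : ℤ)) key.symm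
  have hinv := (ArithmeticFunction.sum_eq_iff_sum_smul_moebius_eq.1 hpart) s (by omega)
  have hGs : (Nat.card {α : L // (minpoly K α).natDegree = s ∧
      ∃ u ∈ T, ((u : K0ˣ) : K0) = Algebra.norm K0 α} : ℤ)
      = ∑ d ∈ s.divisors, (ArithmeticFunction.moebius (s / d) : ℤ) *
        (Nat.card {α : L // (minpoly K α).natDegree ∣ d ∧
          ∃ u ∈ T, ((u : K0ˣ) : K0) = Algebra.norm K0 α} : ℤ) := by
    rw [← hinv, ← Nat.sum_divisorsAntidiagonal'
      (f := fun a b => (ArithmeticFunction.moebius a : ℤ) *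
        (Nat.card {α : L // (minpoly K α).natDegree ∣ b ∧
          ∃ u ∈ T, ((u : K0ˣ) : K0) = Algebra.norm K0 α} : ℤ))]
    apply Finset.sum_congr rfl
    intro x hx
    rw [smul_eq_mul]
  have hq0cast : ((q0 : ℤ) - 1) = ((e : ℕ) : ℤ) := by
    rw [hedef]
    push_cast [Nat.cast_sub (le_of_lt hq0_1)]
    ring
  rw [hGs, hq0cast, Finset.sum_mul, Finset.mul_sum]
  apply Finset.sum_congr rfl
  intro d hd
  have hd_dvd : d ∣ s := (Nat.mem_divisors.1 hd).1
  have hd0 : 0 < d := Nat.pos_of_mem_divisors hd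
  have harith := key_arith (by omega : 2 ≤ q) he0 ht0 hte heq hd_dvd hd0 hm0e
  have harithZ : ((e : ℕ) : ℤ) * ((Nat.gcd (q ^ d - 1) (m0 * t) : ℕ) : ℤ)
      = ((t : ℕ) : ℤ) * ((((q ^ d - 1 : ℕ)) : ℤ) * ((Nat.gcd (s / d) (e / t) : ℕ) : ℤ)) := by
    exact_mod_cast congrArg (fun x : ℕ => (x : ℤ)) harith
  have hndZ : (((q ^ d - 1 : ℕ)) : ℤ) = (q : ℤ) ^ d - 1 := by
    push_cast [Nat.cast_sub (Nat.one_le_pow _ _ (by omega : 0 < q))]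
    ring
  rw [hndZ] at harithZ
  rw [hcount d hd_dvd hd0]
  linear_combination (ArithmeticFunction.moebius (s / d) : ℤ) * harithZ
end

section
/- Let A ⊆ F_{q^s} be a finite set of elements of degree exactly s over F_q with pairwise distinct minimal polynomials, and let 1 ≤ k < |A|. Then the code C = { (a(α))_{α ∈ A} : a ∈ F_q[x], deg a < sk } ⊆ F_{q^s}^{|A|} is an F_q-linear code of cardinality q^{sk} whose minimum Hamming distance equals |A| - k + 1; that is, C is an MDS-like code meeting the Singleton-type bound: every nonzero codeword has Hamming weight at least |A| - k + 1. -/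
open Polynomial Finset

section Aux

variable {K L : Type*} [Field K] [Fintype K] [Field L] [Fintype L] [Algebra K L]
    [DecidableEq L]

/-- Key lemma: product of minimal polynomials of the roots divides the polynomial. -/
lemma stmt14_key (s : ℕ) (hs : 1 ≤ s) (hdim : Module.finrank K L = s)
    (A : Finset L) (hdeg : ∀ α ∈ A, (minpoly K α).natDegree = s)
    (hdist : ∀ α ∈ A, ∀ β ∈ A, α ≠ β → minpoly K α ≠ minpoly K β)
    (a : Polynomial K) (ha : a ≠ 0) :
    s * (A.filter fun α => Polynomial.aeval α a = 0).card ≤ a.natDegree := by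
  haveI : FiniteDimensional K L := FiniteDimensional.of_finrank_pos (by omega)
  set R := A.filter fun α => Polynomial.aeval α a = 0 with hR
  have hint : ∀ α : L, IsIntegral K α := fun α => Algebra.IsIntegral.isIntegral α
  have hdvd : (∏ α ∈ R, minpoly K α) ∣ a := by
    apply Finset.prod_dvd_of_coprime
    · intro α hα β hβ hne
      have hαA : α ∈ A := (Finset.mem_filter.mp hα).1
      have hβA : β ∈ A := (Finset.mem_filter.mp hβ).1
      exact (minpoly.irreducible (hint α)).coprime_iff_not_dvd.mpr
        (fun hd => hdist α hαA β hβA hne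
          (eq_of_monic_of_associated (minpoly.monic (hint α)) (minpoly.monic (hint β))
            ((minpoly.irreducible (hint α)).associated_of_dvd
              (minpoly.irreducible (hint β)) hd)))
    · intro α hα
      exact minpoly.dvd K α (Finset.mem_filter.mp hα).2
  have hne : ∀ α ∈ R, minpoly K α ≠ 0 := fun α _ => minpoly.ne_zero (hint α)
  have hdeg' : (∏ α ∈ R, minpoly K α).natDegree = s * R.card := by
    rw [Polynomial.natDegree_prod _ _ hne]
    rw [Finset.sum_congr rfl (fun α hα => hdeg α (Finset.mem_filter.mp hα).1)]
    simp [mul_comm]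
    exact Or.inl rfl
  calc s * R.card = (∏ α ∈ R, minpoly K α).natDegree := hdeg'.symm
    _ ≤ a.natDegree := Polynomial.natDegree_le_of_dvd hdvd ha

end Aux

/-- Evaluation of polynomials of degree `< sk` at a set `A ⊆ F_{q^s}` of elements
of degree exactly `s` over `F_q` with pairwise distinct minimal polynomials gives
an `F_q`-linear MDS code: it has `q^{sk}` codewords and its minimum Hamming
distance is `|A| - k + 1`. -/
theorem stmt_14 (K L : Type*) [Field K] [Fintype K] [Field L] [Fintype L] [Algebra K L]
    [DecidableEq L] (s k : ℕ) (hs : 1 ≤ s) (hdim : Module.finrank K L = s)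
    (A : Finset L) (hdeg : ∀ α ∈ A, (minpoly K α).natDegree = s)
    (hdist : ∀ α ∈ A, ∀ β ∈ A, α ≠ β → minpoly K α ≠ minpoly K β)
    (hk : 1 ≤ k) (hkA : k < A.card) :
    Nat.card {v : A → L // ∃ a : Polynomial K, a.natDegree < s * k ∧
        ∀ α : A, v α = Polynomial.aeval (α : L) a} = Fintype.card K ^ (s * k) ∧
    (∀ a : Polynomial K, a ≠ 0 → a.natDegree < s * k →
        A.card - k + 1 ≤ (A.filter fun α => Polynomial.aeval α a ≠ 0).card) ∧
    (∃ a : Polynomial K, a ≠ 0 ∧ a.natDegree < s * k ∧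
        (A.filter fun α => Polynomial.aeval α a ≠ 0).card = A.card - k + 1) := by
  haveI : FiniteDimensional K L := FiniteDimensional.of_finrank_pos (by omega)
  have hint : ∀ α : L, IsIntegral K α := fun α => Algebra.IsIntegral.isIntegral α
  have hsk : 1 ≤ s * k := Nat.one_le_iff_ne_zero.mpr (by positivity)
  -- membership in degreeLT vs natDegree bound
  have hmem : ∀ a : Polynomial K, a ∈ Polynomial.degreeLT K (s * k) ↔ a.natDegree < s * k := by
    intro a
    rw [Polynomial.mem_degreeLT]
    rcases eq_or_ne a 0 with rfl | h
    · simp [Polynomial.degree_zero]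
      constructor
      · intro _; omega
      · intro _; exact WithBot.bot_lt_coe _
    · exact (Polynomial.natDegree_lt_iff_degree_lt h).symm
  -- key root-count bound
  have key : ∀ a : Polynomial K, a ≠ 0 → a.natDegree < s * k →
      (A.filter fun α => Polynomial.aeval α a = 0).card < k := by
    intro a ha hda
    have := stmt14_key s hs hdim A hdeg hdist a ha
    by_contra h
    push_neg at h
    have : s * k ≤ s * (A.filter fun α => Polynomial.aeval α a = 0).card :=
      Nat.mul_le_mul_left s h
    omega
  refine ⟨?_, ?_, ?_⟩
  · -- cardinality
    have e : (Polynomial.degreeLT K (s * k)) ≃ {v : A → L // ∃ a : Polynomial K,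
        a.natDegree < s * k ∧ ∀ α : A, v α = Polynomial.aeval (α : L) a} := by
      refine Equiv.ofBijective
        (fun a => ⟨fun α => Polynomial.aeval (α : L) (a : Polynomial K),
          ⟨a, (hmem _).mp a.2, fun α => rfl⟩⟩) ⟨?_, ?_⟩
      · rintro ⟨a, haa⟩ ⟨b, hbb⟩ hab
        simp only [Subtype.mk.injEq, funext_iff] at hab ⊢
        by_contra hne
        have hsub : a - b ≠ 0 := sub_ne_zero_of_ne hne
        have hdsub : (a - b).natDegree < s * k := by
          have : a - b ∈ Polynomial.degreeLT K (s * k) := Submodule.sub_mem _ haa hbb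
          exact (hmem _).mp this
        have hall : ∀ α ∈ A, Polynomial.aeval α (a - b) = 0 := by
          intro α hα
          have := hab ⟨α, hα⟩
          simp only [map_sub]
          rw [this]; ring
        have hfA : (A.filter fun α => Polynomial.aeval α (a - b) = 0) = A :=
          Finset.filter_true_of_mem hall
        have hc := key (a - b) hsub hdsub
        rw [hfA] at hc
        omega
      · rintro ⟨v, a, hda, hv⟩
        exact ⟨⟨a, (hmem a).mpr hda⟩, by simp [Subtype.mk.injEq, funext_iff, fun α => (hv α).symm]⟩
    rw [← Nat.card_congr e, Nat.card_congr (Polynomial.degreeLTEquiv K (s * k)).toEquiv]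
    simp [Nat.card_eq_fintype_card]
  · -- distance bound
    intro a ha hda
    have h1 := key a ha hda
    have h2 := Finset.card_filter_add_card_filter_not (s := A)
      (p := fun α => Polynomial.aeval α a = 0)
    have : (A.filter fun α => ¬ Polynomial.aeval α a = 0).card
        = (A.filter fun α => Polynomial.aeval α a ≠ 0).card := rfl
    omega
  · -- existence of codeword of minimal weight
    obtain ⟨B, hBA, hBcard⟩ := Finset.exists_subset_card_eq (s := A) (n := k - 1) (by omega)
    refine ⟨∏ β ∈ B, minpoly K β, ?_, ?_, ?_⟩
    · exact Finset.prod_ne_zero_iff.mpr fun β _ => minpoly.ne_zero (hint β)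
    · have : (∏ β ∈ B, minpoly K β).natDegree = s * (k - 1) := by
        rw [Polynomial.natDegree_prod _ _ (fun β _ => minpoly.ne_zero (hint β))]
        rw [Finset.sum_congr rfl (fun β hβ => hdeg β (hBA hβ))]
        simp [mul_comm, hBcard]
      rw [this]
      calc s * (k - 1) < s * (k - 1) + s := by omega
        _ = s * k := by rw [← Nat.mul_succ]; congr 1; omega
    · have hroot : ∀ α ∈ A, (Polynomial.aeval α (∏ β ∈ B, minpoly K β) = 0 ↔ α ∈ B) := by
        intro α hα
        rw [map_prod, Finset.prod_eq_zero_iff]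
        constructor
        · rintro ⟨β, hβ, hβ0⟩
          have hdd : minpoly K α ∣ minpoly K β := minpoly.dvd K α hβ0
          have heq : minpoly K α = minpoly K β :=
            eq_of_monic_of_associated (minpoly.monic (hint α)) (minpoly.monic (hint β))
              ((minpoly.irreducible (hint α)).associated_of_dvd
                (minpoly.irreducible (hint β)) hdd)
          by_contra hne
          have : α ≠ β := fun h => hne (h ▸ hβ)
          exact hdist α hα β (hBA hβ) this heq
        · intro hαB
          exact ⟨α, hαB, minpoly.aeval K α⟩
      have hfe : (A.filter fun α => Polynomial.aeval α (∏ β ∈ B, minpoly K β) ≠ 0) = A \ B := by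
        ext α
        simp only [Finset.mem_filter, Finset.mem_sdiff, ne_eq]
        constructor
        · rintro ⟨hα, hn0⟩
          exact ⟨hα, fun hαB => hn0 ((hroot α hα).mpr hαB)⟩
        · rintro ⟨hα, hnB⟩
          exact ⟨hα, fun h0 => hnB ((hroot α hα).mp h0)⟩
      rw [hfe, Finset.card_sdiff_of_subset hBA, hBcard]
      omega
end

section
/- Let q = q_0^r, let T be a subgroup of F_{q_0}^*, let ρ ∈ Aut(F_q) with fixed field F_{q_0}, and let A ⊆ F_{q^s} be a finite set of elements of degree exactly s over F_q with pairwise distinct minimal polynomials, such that for each α ∈ A the quantity N_{F_q/F_{q_0}}((-1)^s p_α(0)) lies in T, where p_α is the minimal polynomial of α. Let 1 ≤ k < |A| and let η ∈ F_q satisfy N_{F_q/F_{q_0}}(η) ∉ (-1)^{skr}·T. Then every nonzero polynomial a(x) ∈ F_q[x] of degree at most sk whose coefficients satisfy a_{sk} = η·ρ(a_0) has at most k - 1 roots in A. -/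
/-- Twisted evaluation codes: if `η ∈ F_q` has `N_{F_q/F_{q_0}}(η) ∉ (-1)^{skr}·T`,
then every nonzero `a ∈ F_q[x]` of degree at most `sk` with `a_{sk} = η·ρ(a_0)`
has at most `k - 1` roots in `A`, where `A ⊆ F_{q^s}` consists of elements of
degree exactly `s` over `F_q` with pairwise distinct minimal polynomials `p_α`
satisfying `N_{F_q/F_{q_0}}((-1)^s p_α(0)) ∈ T`. -/
theorem stmt_15 (K0 K L : Type*) [Field K0] [Fintype K0] [Field K] [Fintype K]
    [Field L] [Fintype L] [Algebra K0 K] [Algebra K L] [DecidableEq L]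
    (s k : ℕ) (hs : 1 ≤ s) (hk : 1 ≤ k) (hdim : Module.finrank K L = s)
    (T : Subgroup K0ˣ)
    (ρ : K ≃+* K) (hρ : ∀ x : K, ρ x = x ↔ ∃ y : K0, algebraMap K0 K y = x)
    (A : Finset L) (hdeg : ∀ α ∈ A, (minpoly K α).natDegree = s)
    (hdist : ∀ α ∈ A, ∀ β ∈ A, α ≠ β → minpoly K α ≠ minpoly K β)
    (hT : ∀ α ∈ A, ∃ u ∈ T, ((u : K0ˣ) : K0) =
        Algebra.norm K0 ((-1 : K) ^ s * (minpoly K α).coeff 0))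
    (hkA : k < A.card)
    (η : K)
    (hη : ¬ ∃ u ∈ T, Algebra.norm K0 η =
        (-1 : K0) ^ (s * k * Module.finrank K0 K) * ((u : K0ˣ) : K0))
    (a : Polynomial K) (ha : a ≠ 0) (hda : a.natDegree ≤ s * k)
    (htwist : a.coeff (s * k) = η * ρ (a.coeff 0)) :
    (A.filter fun α => Polynomial.aeval α a = 0).card ≤ k - 1 := by
  classical
  set n := Module.finrank K0 K with hn
  by_contra hcon
  push_neg at hcon
  set R := A.filter (fun α => Polynomial.aeval α a = 0) with hRdef
  have hRA : R ⊆ A := Finset.filter_subset _ _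
  have hkR : k ≤ R.card := by omega
  -- integrality and minpoly facts
  have hint : ∀ α : L, IsIntegral K α := fun α => Algebra.IsIntegral.isIntegral α
  have hirr : ∀ α ∈ A, Irreducible (minpoly K α) := fun α _ => minpoly.irreducible (hint α)
  have hmon : ∀ α ∈ A, (minpoly K α).Monic := fun α _ => minpoly.monic (hint α)
  -- product of minpolys divides a
  have hdvd : ∀ α ∈ R, minpoly K α ∣ a := by
    intro α hα
    exact minpoly.dvd K α (by simpa using (Finset.mem_filter.mp hα).2)
  have hprod : (∏ α ∈ R, minpoly K α) ∣ a := by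
    apply Finset.prod_dvd_of_coprime
    · intro α hα β hβ hne
      have hαA := hRA hα
      have hβA := hRA hβ
      refine (Irreducible.coprime_iff_not_dvd (hirr α hαA)).mpr (fun hd => ?_)
      exact hdist α hαA β hβA hne
        (Polynomial.eq_of_monic_of_associated (hmon α hαA) (hmon β hβA)
          ((hirr α hαA).associated_of_dvd (hirr β hβA) hd))
    · exact hdvd
  set P := ∏ α ∈ R, minpoly K α with hPdef
  have hPmon : P.Monic := Polynomial.monic_prod_of_monic _ _ (fun α hα => hmon α (hRA hα))
  have hPdeg : P.natDegree = s * R.card := by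
    rw [hPdef, Polynomial.natDegree_prod _ _ (fun α hα => (hmon α (hRA hα)).ne_zero)]
    rw [Finset.sum_congr rfl (fun α hα => hdeg α (hRA hα)), Finset.sum_const, smul_eq_mul,
      mul_comm]
  have hdegle : P.natDegree ≤ a.natDegree := Polynomial.natDegree_le_of_dvd hprod ha
  have hRk : R.card = k := by
    have : s * R.card ≤ s * k := le_trans (hPdeg ▸ hdegle) hda
    have := Nat.le_of_mul_le_mul_left this (by omega)
    omega
  have hPdeg' : P.natDegree = s * k := by rw [hPdeg, hRk]
  -- a = P * C c
  obtain ⟨b, hb⟩ := hprod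
  have hbne : b ≠ 0 := by rintro rfl; simp at hb; exact ha hb
  have hbdeg : b.natDegree = 0 := by
    have := Polynomial.natDegree_mul hPmon.ne_zero hbne
    rw [← hb, hPdeg'] at this
    omega
  obtain ⟨c, rfl⟩ := Polynomial.natDegree_eq_zero.mp hbdeg
  have hcne : c ≠ 0 := by rintro rfl; simp at hbne
  have hc0 : a.coeff 0 = P.coeff 0 * c := by rw [hb, Polynomial.mul_coeff_zero]; simp
  have hcsk : a.coeff (s * k) = c := by
    rw [hb, Polynomial.coeff_mul_C, ← hPdeg', hPmon.coeff_natDegree, one_mul]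
  -- norm machinery
  have hFD : FiniteDimensional K0 K := Module.Finite.of_finite
  let σ : K ≃ₐ[K0] K := AlgEquiv.ofRingEquiv (f := ρ) (fun y => (hρ _).mpr ⟨y, rfl⟩)
  have hnormρ : ∀ x : K, Algebra.norm K0 (ρ x) = Algebra.norm K0 x := fun x =>
    Algebra.norm_eq_of_algEquiv σ x
  have hnormm1 : Algebra.norm K0 (-1 : K) = (-1 : K0) ^ n := by
    have : (-1 : K) = algebraMap K0 K (-1) := by simp
    rw [this, Algebra.norm_algebraMap]
  -- key: norm of product of constant coefficients
  have key : ∀ B : Finset L, B ⊆ A → ∃ u ∈ T,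
      (∏ α ∈ B, Algebra.norm K0 ((minpoly K α).coeff 0)) =
        (-1 : K0) ^ (n * s * B.card) * ((u : K0ˣ) : K0) := by
    intro B
    induction B using Finset.induction_on with
    | empty => intro _; exact ⟨1, T.one_mem, by simp⟩
    | insert _ _ hx ih =>
      rename_i β B'
      intro hBA
      obtain ⟨u, hu, hueq⟩ := ih (fun x hxm => hBA (Finset.mem_insert_of_mem hxm))
      obtain ⟨v, hv, hveq⟩ := hT β (hBA (Finset.mem_insert_self _ _))
      have hβnorm : Algebra.norm K0 ((minpoly K β).coeff 0)
          = (-1 : K0) ^ (n * s) * ((v : K0ˣ) : K0) := by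
        rw [map_mul, map_pow, hnormm1, ← pow_mul] at hveq
        have h2 : ((-1 : K0) ^ (n * s)) * ((-1 : K0) ^ (n * s)) = 1 := by
          rw [← pow_add, ← two_mul, pow_mul]; simp [pow_mul]
        calc Algebra.norm K0 ((minpoly K β).coeff 0)
            = ((-1 : K0) ^ (n * s) * (-1 : K0) ^ (n * s)) *
              Algebra.norm K0 ((minpoly K β).coeff 0) := by rw [h2, one_mul]
          _ = (-1 : K0) ^ (n * s) * ((v : K0ˣ) : K0) := by
              rw [mul_assoc, ← hveq]
      refine ⟨v * u, T.mul_mem hv hu, ?_⟩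
      rw [Finset.prod_insert hx, hueq, hβnorm, Finset.card_insert_of_notMem hx,
        show n * s * (B'.card + 1) = n * s + n * s * B'.card from by ring, pow_add]
      push_cast
      ring
  obtain ⟨u, hu, hueq⟩ := key R hRA
  -- constant coefficient of P
  have hP0 : P.coeff 0 = ∏ α ∈ R, (minpoly K α).coeff 0 := by
    rw [hPdef, Polynomial.coeff_zero_eq_eval_zero, Polynomial.eval_prod]
    exact Finset.prod_congr rfl (fun α _ => (Polynomial.coeff_zero_eq_eval_zero _).symm)
  -- main equation
  have heq : c = η * ρ (P.coeff 0 * c) := by rw [← hc0, ← hcsk, htwist]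
  have hnormc : Algebra.norm K0 c ≠ 0 := by
    rw [Algebra.norm_ne_zero_iff]; exact hcne
  have hmain : Algebra.norm K0 η * Algebra.norm K0 (P.coeff 0) = 1 := by
    have := congrArg (Algebra.norm K0) heq
    rw [map_mul, hnormρ, map_mul] at this
    apply mul_right_cancel₀ hnormc
    rw [one_mul]
    linear_combination -this
  have hPnorm : Algebra.norm K0 (P.coeff 0) =
      (-1 : K0) ^ (s * k * n) * ((u : K0ˣ) : K0) := by
    rw [hP0, map_prod, hueq, hRk, show n * s * k = s * k * n from by ring]
  apply hη
  refine ⟨u⁻¹, T.inv_mem hu, ?_⟩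
  rw [hPnorm] at hmain
  have h3 : Algebra.norm K0 η = ((-1 : K0) ^ (s * k * n) * ((u : K0ˣ) : K0))⁻¹ :=
    eq_inv_of_mul_eq_one_left hmain
  rw [h3, mul_inv, ← inv_pow, inv_neg_one]
  congr 1
  simp
end
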